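/- In the original Calkin-Wilf tree rooted at 1, if a/b is a reduced positive rational with continued fraction representation [a_0, a_1, ..., a_k] (with a_k ≠ 1 when a/b ≠ 1), then a/b appears in the tree at depth a_0 + a_1 + ... + a_k − 1. -/

import Mathlib

/-- The value of a finite continued fraction `[q₀, q₁, …, q_r]`. -/
def cfVal : List ℕ → ℚ
  | [] => 0
  | q :: l => (q : ℚ) + (cfVal l)⁻¹

/-- Row `n` of the Calkin-Wilf tree rooted at `1`. -/
def cwRow : ℕ → List ℚ
  | 0 => [1]
  | n + 1 => (cwRow n).flatMap fun w => [w / (w + 1), w + 1]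

lemma cfVal_nonneg (l : List ℕ) : 0 ≤ cfVal l := by
  induction l with
  | nil => simp [cfVal]
  | cons q l ih => simp only [cfVal]; positivity

lemma cfVal_ge_one (q : ℕ) (l : List ℕ) (h : 1 ≤ q) : 1 ≤ cfVal (q :: l) := by
  have h1 := cfVal_nonneg l
  have h2 : (1 : ℚ) ≤ (q : ℚ) := by exact_mod_cast h
  have h3 : (0 : ℚ) ≤ (cfVal l)⁻¹ := by positivity
  simp only [cfVal]
  linarith

lemma mem_right (x : ℚ) (n : ℕ) (h : x ∈ cwRow n) : x + 1 ∈ cwRow (n + 1) := by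
  simp only [cwRow, List.mem_flatMap]
  exact ⟨x, h, by simp⟩

lemma mem_left (x : ℚ) (n : ℕ) (h : x ∈ cwRow n) : x / (x + 1) ∈ cwRow (n + 1) := by
  simp only [cwRow, List.mem_flatMap]
  exact ⟨x, h, by simp⟩

lemma inv_succ_eq (t : ℚ) (h : 0 < t) : (t + 1)⁻¹ = t⁻¹ / (t⁻¹ + 1) := by
  have h1 : t ≠ 0 := ne_of_gt h
  have h2 : t + 1 ≠ 0 := by linarith
  have h3 : t⁻¹ + 1 ≠ 0 := by positivity
  field_simp
  ring

lemma getLastD_le_sum : ∀ l : List ℕ, l.getLastD 0 ≤ l.sum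
  | [] => le_refl 0
  | [a] => by simp
  | a :: b :: l => by
    have ih := getLastD_le_sum (b :: l)
    simp only [List.getLastD_cons, List.sum_cons] at *
    omega

lemma main_lemma (n : ℕ) : ∀ qs : List ℕ, qs.sum ≤ n →
    (∀ x ∈ qs.tail, 1 ≤ x) → 1 ≤ qs.getLastD 0 →
    cfVal qs ∈ cwRow (qs.sum - 1) := by
  induction n with
  | zero =>
    intro qs hs ht hl
    have := getLastD_le_sum qs
    omega
  | succ n ih =>
    intro qs hs ht hl
    match qs with
    | [] => simp at hl
    | (a + 1) :: l =>
      by_cases hbase : a = 0 ∧ l = []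
      · obtain ⟨ha, hle⟩ := hbase
        subst ha; subst hle
        show cfVal [1] ∈ cwRow ([1].sum - 1)
        norm_num [cfVal, cwRow]
      · have hsum1 : 1 ≤ (a :: l).sum := by
          match l with
          | [] =>
            have : a ≠ 0 := fun h => hbase ⟨h, rfl⟩
            simp; omega
          | c :: cs =>
            have hc : 1 ≤ c := ht c (by simp)
            simp [List.sum_cons]; omega
        have hlast' : 1 ≤ (a :: l).getLastD 0 := by
          match l with
          | [] =>
            have : a ≠ 0 := fun h => hbase ⟨h, rfl⟩
            simp; omega
          | c :: cs =>
            simp only [List.getLastD_cons] at hl ⊢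
            exact hl
        have htail' : ∀ x ∈ (a :: l).tail, 1 ≤ x := fun x hx => ht x hx
        have hs' : (a :: l).sum ≤ n := by
          simp only [List.sum_cons] at hs ⊢; omega
        have hmem := ih (a :: l) hs' htail' hlast'
        have hstep := mem_right _ _ hmem
        have heq : cfVal ((a + 1) :: l) = cfVal (a :: l) + 1 := by
          simp only [cfVal]; push_cast; ring
        have hidx : (a :: l).sum - 1 + 1 = ((a + 1) :: l).sum - 1 := by
          simp only [List.sum_cons] at hsum1 ⊢; omega
        rw [heq]
        rw [hidx] at hstep
        exact hstep
    | 0 :: l =>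
      match l with
      | [] => simp at hl
      | 0 :: rest =>
        exfalso
        have := ht 0 (by simp)
        omega
      | (b + 1) :: rest =>
        match b, rest with
        | 0, [] =>
          show cfVal [0, 1] ∈ cwRow ([0, 1].sum - 1)
          norm_num [cfVal, cwRow]
        | 0, (r :: rs) =>
          have hr : 1 ≤ r := ht r (by simp)
          have htail' : ∀ x ∈ (r :: rs).tail, 1 ≤ x := by
            intro x hx
            exact ht x (List.mem_cons_of_mem 1 (List.mem_cons_of_mem r hx))
          have hlast' : 1 ≤ (r :: rs).getLastD 0 := by
            simp only [List.getLastD_cons] at hl ⊢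
            exact hl
          have hs' : (r :: rs).sum ≤ n := by
            simp only [List.sum_cons] at hs ⊢; omega
          have hmem := ih (r :: rs) hs' htail' hlast'
          have hstep := mem_left _ _ hmem
          set z := cfVal (r :: rs) with hz
          have hz1 : 1 ≤ z := cfVal_ge_one r rs hr
          have heq : cfVal (0 :: 1 :: r :: rs) = z / (z + 1) := by
            have hzdef : z = (r : ℚ) + (cfVal rs)⁻¹ := by
              rw [hz]; simp [cfVal]
            simp only [cfVal, ← hzdef]
            push_cast
            have h1 : z ≠ 0 := by linarith
            have h2 : z + 1 ≠ 0 := by linarith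
            field_simp
            ring
          have hidx : (r :: rs).sum - 1 + 1 = (0 :: 1 :: r :: rs).sum - 1 := by
            simp only [List.sum_cons]; omega
          rw [heq]
          rw [hidx] at hstep
          exact hstep
        | (b + 1), rest =>
          have htail' : ∀ x ∈ (0 :: (b + 1) :: rest).tail, 1 ≤ x := by
            intro x hx
            simp only [List.tail_cons, List.mem_cons] at hx
            rcases hx with h | h
            · omega
            · exact ht x (List.mem_cons_of_mem _ h)
          have hlast' : 1 ≤ (0 :: (b + 1) :: rest).getLastD 0 := by
            match rest with
            | [] => simp
            | c :: cs =>
              simp only [List.getLastD_cons] at hl ⊢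
              exact hl
          have hs' : (0 :: (b + 1) :: rest).sum ≤ n := by
            simp only [List.sum_cons] at hs ⊢; omega
          have hmem := ih _ hs' htail' hlast'
          have hstep := mem_left _ _ hmem
          have hw0 : 0 ≤ cfVal rest := cfVal_nonneg rest
          have hu0 : (0 : ℚ) ≤ (cfVal rest)⁻¹ := by positivity
          have heq : cfVal (0 :: (b + 1 + 1) :: rest)
              = cfVal (0 :: (b + 1) :: rest) / (cfVal (0 :: (b + 1) :: rest) + 1) := by
            simp only [cfVal]
            push_cast
            rw [zero_add, zero_add]
            have ht0 : (0 : ℚ) < (b : ℚ) + 1 + (cfVal rest)⁻¹ := by linarith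
            rw [← inv_succ_eq _ ht0]
            ring_nf
          have hidx : (0 :: (b + 1) :: rest).sum - 1 + 1
              = (0 :: (b + 1 + 1) :: rest).sum - 1 := by
            simp only [List.sum_cons]; omega
          rw [heq]
          rw [hidx] at hstep
          exact hstep

theorem depth_formula (a b : ℕ) (ha : 0 < a) (hb : 0 < b) (hcop : Nat.Coprime a b)
    (qs : List ℕ) (hne : qs ≠ [])
    (htail : ∀ x ∈ qs.tail, 1 ≤ x)
    (hlast : 1 ≤ qs.getLastD 0)
    (hlast2 : (a : ℚ) / b ≠ 1 → 2 ≤ qs.getLastD 0)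
    (hval : cfVal qs = (a : ℚ) / b) :
    (a : ℚ) / b ∈ cwRow (qs.sum - 1) := by
  rw [← hval]
  exact main_lemma qs.sum qs le_rfl htail hlast
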